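/- (Descent property of DCA.) Let φ₁, φ₂ : ℝⁿ → ℝ be convex, and let (xᵏ) and (yᵏ) be sequences in ℝⁿ such that for every k, yᵏ is a subgradient of φ₂ at xᵏ, and x^{k+1} minimizes z ↦ φ₁(z) − ⟨z, yᵏ⟩ over ℝⁿ. Then the sequence k ↦ φ₁(xᵏ) − φ₂(xᵏ) is monotonically decreasing (antitone); in particular, if α := inf{φ₁(x) − φ₂(x) : x ∈ ℝⁿ} is finite, this sequence is bounded below by α. -/

import Mathlib

open Filter Topology

/-- `u` is a subgradient of `f` at `x`: `f z ≥ f x + ⟪u, z - x⟫` for all `z`. -/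
def HasSubgradientAt {n : ℕ} (f : EuclideanSpace ℝ (Fin n) → ℝ)
    (u x : EuclideanSpace ℝ (Fin n)) : Prop :=
  ∀ z, f x + inner ℝ u (z - x) ≤ f z

theorem stmt_9 (n : ℕ) (φ₁ φ₂ : EuclideanSpace ℝ (Fin n) → ℝ)
    (hφ₁ : ConvexOn ℝ Set.univ φ₁) (hφ₂ : ConvexOn ℝ Set.univ φ₂)
    (x y : ℕ → EuclideanSpace ℝ (Fin n))
    (hsub : ∀ k, HasSubgradientAt φ₂ (y k) (x k))
    (hmin : ∀ k, ∀ z : EuclideanSpace ℝ (Fin n),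
      φ₁ (x (k + 1)) - inner ℝ (x (k + 1)) (y k) ≤ φ₁ z - inner ℝ z (y k)) :
    Antitone (fun k => φ₁ (x k) - φ₂ (x k)) ∧
    ∀ α : ℝ, IsGLB (Set.range fun z => φ₁ z - φ₂ z) α →
      ∀ k, α ≤ φ₁ (x k) - φ₂ (x k) := by
  constructor
  · apply antitone_nat_of_succ_le
    intro k
    have h1 := hmin k (x k)
    have h2 := hsub k (x (k + 1))
    have h3 : (inner ℝ (y k) (x (k+1) - x k) : ℝ)
        = inner ℝ (x (k+1)) (y k) - inner ℝ (x k) (y k) := by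
      rw [inner_sub_right, real_inner_comm (x (k+1)), real_inner_comm (x k)]
    show φ₁ (x (k+1)) - φ₂ (x (k+1)) ≤ φ₁ (x k) - φ₂ (x k)
    linarith
  · intro α hα k
    exact hα.1 ⟨x k, rfl⟩
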